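/- For f ∈ (1 - √2, 0), the cubic p_f(t) = t^3 + t^2 - f t + f satisfies p_f(-f) < 0 and p_f(((-f)/5)^{1/3}) > 0; hence p_f has a real root in (-f, ((-f)/5)^{1/3}), and the other two roots of p_f have modulus strictly less than one. -/

import Mathlib

theorem stmt_12 (f : ℝ) (hf1 : 1 - Real.sqrt 2 < f) (hf2 : f < 0) :
    ((-f) ^ 3 + (-f) ^ 2 - f * (-f) + f < 0) ∧
    (0 < ((-f / 5) ^ ((1 : ℝ) / 3)) ^ 3 + ((-f / 5) ^ ((1 : ℝ) / 3)) ^ 2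
          - f * ((-f / 5) ^ ((1 : ℝ) / 3)) + f) ∧
    ∃ t ∈ Set.Ioo (-f) ((-f / 5) ^ ((1 : ℝ) / 3)),
      t ^ 3 + t ^ 2 - f * t + f = 0 ∧
      ∀ z : ℂ, z ^ 3 + z ^ 2 - (f : ℂ) * z + (f : ℂ) = 0 → z ≠ (t : ℂ) →
        ‖z‖ < 1 := by
  have h2 : Real.sqrt 2 ^ 2 = 2 := Real.sq_sqrt (by norm_num)
  have h2' : (1.4 : ℝ) < Real.sqrt 2 := by nlinarith [Real.sqrt_nonneg 2]
  have hg : -f < Real.sqrt 2 - 1 := by linarith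
  have hgpos : 0 < -f := by linarith
  have hglt1 : -f < 1 := by nlinarith
  set c := (-f / 5) ^ ((1 : ℝ) / 3) with hcdef
  have hb5 : (0 : ℝ) < -f / 5 := by linarith
  have hcpos : 0 < c := Real.rpow_pos_of_pos hb5 _
  have hc3 : c ^ 3 = -f / 5 := by
    rw [hcdef, ← Real.rpow_natCast ((-f / 5) ^ ((1:ℝ)/3)) 3, ← Real.rpow_mul hb5.le]
    norm_num
  -- part 1
  have hA : 0 < 2 - (-f + 1) ^ 2 := by nlinarith
  have part1 : (-f) ^ 3 + (-f) ^ 2 - f * (-f) + f < 0 := by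
    nlinarith [mul_pos hgpos hA]
  -- part 2
  have part2 : 0 < c ^ 3 + c ^ 2 - f * c + f := by
    nlinarith [sq_nonneg (c * (5 * c - 2)), mul_pos hcpos hcpos]
  -- -f < c
  have hgsq : (-f) ^ 2 < 1 / 5 := by nlinarith
  have hgc3 : (-f) ^ 3 < c ^ 3 := by rw [hc3]; nlinarith
  have hglt : -f < c := by
    by_contra h
    push_neg at h
    have := pow_le_pow_left₀ hcpos.le h 3
    linarith
  have hc1 : c < 1 := by
    by_contra h
    push_neg at h
    have : (1:ℝ) ^ 3 ≤ c ^ 3 := pow_le_pow_left₀ (by norm_num) h 3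
    rw [hc3] at this
    norm_num at this
    linarith
  -- IVT
  obtain ⟨t, htmem, ht0⟩ :
      ∃ t ∈ Set.Ioo (-f) c, t ^ 3 + t ^ 2 - f * t + f = 0 := by
    have hcont : ContinuousOn (fun x : ℝ => x ^ 3 + x ^ 2 - f * x + f)
        (Set.Icc (-f) c) := by fun_prop
    have hsub := intermediate_value_Ioo hglt.le hcont
    have h0 : (0:ℝ) ∈ Set.Ioo ((-f) ^ 3 + (-f) ^ 2 - f * (-f) + f)
        (c ^ 3 + c ^ 2 - f * c + f) := ⟨part1, part2⟩
    obtain ⟨t, htm, htv⟩ := hsub h0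
    exact ⟨t, htm, htv⟩
  refine ⟨part1, part2, t, htmem, ht0, ?_⟩
  obtain ⟨htg, htc⟩ := htmem
  have htpos : 0 < t := lt_trans hgpos htg
  have ht1 : t < 1 := lt_trans htc hc1
  have hbpos : 0 < t ^ 2 + t - f := by nlinarith
  have htb : t * (t ^ 2 + t - f) = -f := by linear_combination ht0
  have hblt1 : t ^ 2 + t - f < 1 := by
    have h2' : t * (t ^ 2 + t - f) < t * 1 := by rw [htb]; linarith
    exact lt_of_mul_lt_mul_left h2' htpos.le
  intro z hz hzt
  have htC : (t:ℂ) ^ 3 + (t:ℂ) ^ 2 - (f:ℂ) * t + f = 0 := by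
    have := congrArg (fun x : ℝ => (x : ℂ)) ht0
    push_cast at this
    exact this
  have hq : z ^ 2 + ((t:ℂ) + 1) * z + ((t:ℂ) ^ 2 + t - f) = 0 := by
    have hfac : (z - t) * (z ^ 2 + ((t:ℂ) + 1) * z + ((t:ℂ) ^ 2 + t - f)) = 0 := by
      linear_combination hz - htC
    rcases mul_eq_zero.mp hfac with h | h
    · exact absurd (sub_eq_zero.mp h) hzt
    · exact h
  set x := z.re with hxdef
  set y := z.im with hydef
  have hre := congrArg Complex.re hq
  have him := congrArg Complex.im hq
  simp [pow_two, Complex.add_re, Complex.add_im, Complex.mul_re, Complex.mul_im,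
    Complex.ofReal_re, Complex.ofReal_im, Complex.one_re, Complex.one_im,
    Complex.sub_re, Complex.sub_im] at hre him
  have hre' : x * x - y * y + (t + 1) * x + (t * t + t - f) = 0 := hre
  have him' : x * y + y * x + (t + 1) * y = 0 := him
  by_cases hy : y = 0
  · -- z is real
    have hre0 : x * x + (t + 1) * x + (t * t + t - f) = 0 := by
      rw [hy] at hre'; linarith [hre']
    have hx0 : x < 0 := by
      by_contra h
      push_neg at h
      have h1 : (0:ℝ) ≤ (t + 1) * x := mul_nonneg (by linarith) h
      have h2 : (0:ℝ) ≤ x * x := mul_nonneg h h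
      linarith [hre0, hbpos]
    have hx1 : -1 < x := by
      by_contra h
      push_neg at h
      have h1 : (0:ℝ) ≤ (-1 - x) * (-x - t) :=
        mul_nonneg (by linarith) (by linarith)
      have h2 : (-1 - x) * (-x - t) = x * x + t * x + x + t := by ring
      rw [h2] at h1
      linarith [hre0, mul_self_nonneg t]
    have hzx : z = (x : ℂ) := by
      apply Complex.ext <;> simp [← hxdef, ← hydef, hy]
    rw [hzx, Complex.norm_real, Real.norm_eq_abs, abs_lt]
    constructor <;> linarith
  · -- z is not real
    have hfact : y * (2 * x + t + 1) = 0 := by linear_combination him'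
    have hx : 2 * x + t + 1 = 0 := by
      rcases mul_eq_zero.mp hfact with h | h
      · exact absurd h hy
      · exact h
    have hsq : x ^ 2 + y ^ 2 = t ^ 2 + t - f := by
      linear_combination (-1 : ℝ) * hre' + x * hx
    have habs2 : ‖z‖ ^ 2 = x ^ 2 + y ^ 2 := by
      rw [Complex.sq_norm, Complex.normSq_apply]; ring
    have h1 : ‖z‖ ^ 2 < 1 := by rw [habs2, hsq]; linarith
    exact lt_of_pow_lt_pow_left₀ 2 zero_le_one (by simpa using h1)
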